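/- The function f(γ) = ln(1+γ) - c·√(2γ/(1+γ)) is strictly increasing on the interval (γ̄, ∞), where γ̄ = (√(1+2c²) - 1)/2 and c > 0. -/

import Mathlib

/-- For `c > 0`, the function `f(γ) = ln(1+γ) - c·√(2γ/(1+γ))` is strictly increasing on
the interval `(γ̄, ∞)` with `γ̄ = (√(1+2c²) - 1)/2`. -/
theorem stmt_3 (c : ℝ) (hc : 0 < c) :
    StrictMonoOn (fun γ : ℝ => Real.log (1 + γ) - c * Real.sqrt (2 * γ / (1 + γ)))
      (Set.Ioi ((Real.sqrt (1 + 2 * c ^ 2) - 1) / 2)) := by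
  set g : ℝ := (Real.sqrt (1 + 2 * c ^ 2) - 1) / 2 with hgdef
  have hsq : (1:ℝ) < Real.sqrt (1 + 2 * c ^ 2) := by
    have : Real.sqrt 1 < Real.sqrt (1 + 2 * c ^ 2) :=
      Real.sqrt_lt_sqrt (by norm_num) (by nlinarith)
    simpa using this
  have hg0 : 0 < g := by rw [hgdef]; linarith
  apply strictMonoOn_of_deriv_pos (convex_Ioi g)
  · -- continuity
    apply ContinuousOn.sub
    · apply ContinuousOn.log (by fun_prop)
      intro x hx
      have : g < x := hx
      linarith
    · apply ContinuousOn.mul continuousOn_const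
      apply ContinuousOn.sqrt
      apply ContinuousOn.div (by fun_prop) (by fun_prop)
      intro x hx
      have : g < x := hx
      linarith
  · intro x hx
    rw [interior_Ioi] at hx
    have hx0 : 0 < x := lt_trans hg0 hx
    have h1x : (0:ℝ) < 1 + x := by linarith
    have hune : 2 * x / (1 + x) ≠ 0 := by positivity
    set s : ℝ := Real.sqrt (2 * x / (1 + x)) with hs
    have hs0 : 0 < s := Real.sqrt_pos.mpr (by positivity)
    have hs2 : s ^ 2 = 2 * x / (1 + x) := Real.sq_sqrt (by positivity)
    -- derivative of inner rational function
    have hu : HasDerivAt (fun γ : ℝ => 2 * γ / (1 + γ)) (2 / (1 + x) ^ 2) x := by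
      have h := ((hasDerivAt_id x).const_mul 2).div
        ((hasDerivAt_id x).const_add 1) (ne_of_gt h1x)
      refine HasDerivAt.congr_deriv h ?_
      simp only [id]
      ring
    have hsqrtd : HasDerivAt (fun γ : ℝ => Real.sqrt (2 * γ / (1 + γ)))
        (1 / (2 * s) * (2 / (1 + x) ^ 2)) x :=
      (Real.hasDerivAt_sqrt hune).comp x hu
    have hlogd : HasDerivAt (fun γ : ℝ => Real.log (1 + γ)) (1 / (1 + x)) x := by
      have h := (Real.hasDerivAt_log (ne_of_gt h1x)).comp x ((hasDerivAt_id x).const_add 1)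
      simpa [Function.comp_def] using h
    have hf : HasDerivAt (fun γ : ℝ => Real.log (1 + γ) - c * Real.sqrt (2 * γ / (1 + γ)))
        (1 / (1 + x) - c * (1 / (2 * s) * (2 / (1 + x) ^ 2))) x :=
      hlogd.sub (hsqrtd.const_mul c)
    rw [hf.deriv]
    -- positivity of the derivative
    have hkey : c ^ 2 < 2 * x * (1 + x) := by
      have h2 : Real.sqrt (1 + 2 * c ^ 2) < 2 * x + 1 := by
        have hx' : (Real.sqrt (1 + 2 * c ^ 2) - 1) / 2 < x := hx
        linarith
      have h3 : 1 + 2 * c ^ 2 < (2 * x + 1) ^ 2 := by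
        have := (Real.sqrt_lt' (by linarith : (0:ℝ) < 2 * x + 1)).mp h2
        linarith
      nlinarith
    have hcs : c < (1 + x) * s := by
      have hsq2 : c ^ 2 < ((1 + x) * s) ^ 2 := by
        have : ((1 + x) * s) ^ 2 = (1 + x) ^ 2 * (2 * x / (1 + x)) := by
          rw [mul_pow, hs2]
        rw [this]
        have : (1 + x) ^ 2 * (2 * x / (1 + x)) = 2 * x * (1 + x) := by
          field_simp
        rw [this]; exact hkey
      nlinarith [mul_pos h1x hs0]
    have heq : c * (1 / (2 * s) * (2 / (1 + x) ^ 2)) = c / (s * (1 + x) ^ 2) := by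
      field_simp
    rw [heq, sub_pos]
    rw [div_lt_div_iff₀ (by positivity) h1x]
    nlinarith [hcs, hs0, h1x]
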